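/- arXiv:1312.5448 — 2 statements merged into one kernel-verified Lean document; each statement's English description precedes it below -/
import Mathlib

section
/- Conversely, let f: [0,1] × [0,π] → ℝ be continuous. If D(v,ω) = 0 for all (v,ω) ∈ [0,1]², where D(v,ω) = (1/2π)(∫_0^v ∫_0^{πω} f(u,λ) dλ du − v ∫_0^{πω} ∫_0^1 f(u,λ) du dλ), then f(u,λ) does not depend on u, i.e., f(u₁,λ) = f(u₂,λ) for all u₁, u₂ ∈ [0,1] and λ ∈ [0,π]. -/
open intervalIntegral Set MeasureTheory

/-- If a continuous function has `∫_a^v φ = (v-a) * C` on `[a,b]`, then `φ = C` on `[a,b]`. -/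
lemma aux_const_of_integral (φ : ℝ → ℝ) (hφ : Continuous φ) {a b : ℝ} (hab : a < b) (C : ℝ)
    (h : ∀ v ∈ Set.Icc a b, ∫ t in a..v, φ t = (v - a) * C) :
    ∀ u ∈ Set.Icc a b, φ u = C := by
  intro u hu
  have hF : HasDerivWithinAt (fun v => ∫ t in a..v, φ t) (φ u) (Set.Icc a b) u :=
    (intervalIntegral.integral_hasDerivAt_right (hφ.intervalIntegrable a u)
      hφ.stronglyMeasurable.aestronglyMeasurable.stronglyMeasurableAtFilter
      hφ.continuousAt).hasDerivWithinAt
  have hG : HasDerivWithinAt (fun v : ℝ => (v - a) * C) C (Set.Icc a b) u := by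
    simpa using (((hasDerivAt_id u).sub_const a).mul_const C).hasDerivWithinAt
      (s := Set.Icc a b)
  have hF' : HasDerivWithinAt (fun v : ℝ => (v - a) * C) (φ u) (Set.Icc a b) u :=
    hF.congr (fun v hv => (h v hv).symm) ((h u hu).symm)
  exact UniqueDiffWithinAt.eq_deriv _ ((uniqueDiffOn_Icc hab) u hu) hF' hG

/-- The deviation measure `D(v,ω)` from (1.1). -/
noncomputable def Dstat (f : ℝ → ℝ → ℝ) (v ω : ℝ) : ℝ :=
  1 / (2 * Real.pi) *
    ((∫ u in (0 : ℝ)..v, ∫ lam in (0 : ℝ)..(Real.pi * ω), f u lam) -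
      v * ∫ lam in (0 : ℝ)..(Real.pi * ω), ∫ u in (0 : ℝ)..1, f u lam)

/-- Conversely, if `D(v,ω) = 0` for all `(v,ω) ∈ [0,1]²` and `f`
is continuous, then `f(u,λ)` does not depend on `u`. -/
theorem stationary_of_Dstat_eq_zero (f : ℝ → ℝ → ℝ)
    (hf : ContinuousOn (fun p : ℝ × ℝ => f p.1 p.2)
      (Set.Icc 0 1 ×ˢ Set.Icc 0 Real.pi))
    (hD : ∀ v ∈ Set.Icc (0 : ℝ) 1, ∀ ω ∈ Set.Icc (0 : ℝ) 1, Dstat f v ω = 0) :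
    ∀ u₁ ∈ Set.Icc (0 : ℝ) 1, ∀ u₂ ∈ Set.Icc (0 : ℝ) 1,
      ∀ lam ∈ Set.Icc 0 Real.pi, f u₁ lam = f u₂ lam := by
  have hπ : (0 : ℝ) < Real.pi := Real.pi_pos
  -- Extend `f` to a continuous function `g` on all of `ℝ × ℝ` by Tietze.
  set s : Set (ℝ × ℝ) := Set.Icc 0 1 ×ˢ Set.Icc 0 Real.pi with hs_def
  have hs_closed : IsClosed s := isClosed_Icc.prod isClosed_Icc
  obtain ⟨g, hg⟩ := ContinuousMap.exists_restrict_eq (Y := ℝ) hs_closed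
    ⟨_, hf.restrict⟩
  have hgf : ∀ p ∈ s, g p = f p.1 p.2 := by
    intro p hp
    have := congrFun (congrArg DFunLike.coe hg) ⟨p, hp⟩
    simpa using this
  have hgc : Continuous fun p : ℝ × ℝ => g p := g.continuous
  -- membership helper
  have hmem : ∀ {u lam : ℝ}, u ∈ Set.Icc (0:ℝ) 1 → lam ∈ Set.Icc 0 Real.pi →
      g (u, lam) = f u lam := fun hu hl => hgf _ ⟨hu, hl⟩
  -- The integral identity for `g`.
  have key : ∀ ω ∈ Set.Icc (0:ℝ) 1, ∀ v ∈ Set.Icc (0:ℝ) 1,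
      (∫ u in (0:ℝ)..v, ∫ lam in (0:ℝ)..(Real.pi * ω), g (u, lam)) =
        (v - 0) * ∫ lam in (0:ℝ)..(Real.pi * ω), ∫ u in (0:ℝ)..1, g (u, lam) := by
    intro ω hω v hv
    have hπω : Real.pi * ω ∈ Set.Icc 0 Real.pi := by
      exact ⟨mul_nonneg hπ.le hω.1, by nlinarith [hω.2, hπ]⟩
    have hπω0 : 0 ≤ Real.pi * ω := hπω.1
    -- convert g-integrals to f-integrals
    have hinner : ∀ u ∈ Set.Icc (0:ℝ) 1,
        (∫ lam in (0:ℝ)..(Real.pi * ω), g (u, lam)) =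
          ∫ lam in (0:ℝ)..(Real.pi * ω), f u lam := by
      intro u hu
      apply intervalIntegral.integral_congr
      intro lam hlam
      rw [Set.uIcc_of_le hπω0] at hlam
      exact hmem hu ⟨hlam.1, hlam.2.trans hπω.2⟩
    have h1 : (∫ u in (0:ℝ)..v, ∫ lam in (0:ℝ)..(Real.pi * ω), g (u, lam)) =
        ∫ u in (0:ℝ)..v, ∫ lam in (0:ℝ)..(Real.pi * ω), f u lam := by
      apply intervalIntegral.integral_congr
      intro u hu
      rw [Set.uIcc_of_le hv.1] at hu
      exact hinner u ⟨hu.1, hu.2.trans hv.2⟩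
    have h2 : (∫ lam in (0:ℝ)..(Real.pi * ω), ∫ u in (0:ℝ)..1, g (u, lam)) =
        ∫ lam in (0:ℝ)..(Real.pi * ω), ∫ u in (0:ℝ)..1, f u lam := by
      apply intervalIntegral.integral_congr
      intro lam hlam
      rw [Set.uIcc_of_le hπω0] at hlam
      have hlam' : lam ∈ Set.Icc 0 Real.pi := ⟨hlam.1, hlam.2.trans hπω.2⟩
      apply intervalIntegral.integral_congr
      intro u hu
      rw [Set.uIcc_of_le (zero_le_one)] at hu
      exact hmem hu hlam'
    have := hD v hv ω hω
    unfold Dstat at this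
    have h2π : (1 : ℝ) / (2 * Real.pi) ≠ 0 := by positivity
    have h0 : (∫ u in (0:ℝ)..v, ∫ lam in (0:ℝ)..(Real.pi * ω), f u lam) -
        v * ∫ lam in (0:ℝ)..(Real.pi * ω), ∫ u in (0:ℝ)..1, f u lam = 0 := by
      by_contra h
      exact h (by field_simp at this; linarith [this])
    rw [h1, h2, sub_zero]
    linarith [h0]
  -- Step A: for each ω, the function u ↦ ∫_0^{πω} g(u,λ) dλ is constant on [0,1].
  have stepA : ∀ ω ∈ Set.Icc (0:ℝ) 1, ∀ u ∈ Set.Icc (0:ℝ) 1,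
      (∫ lam in (0:ℝ)..(Real.pi * ω), g (u, lam)) =
        ∫ lam in (0:ℝ)..(Real.pi * ω), ∫ u in (0:ℝ)..1, g (u, lam) := by
    intro ω hω
    apply aux_const_of_integral _ ?_ zero_lt_one _ (key ω hω)
    exact intervalIntegral.continuous_parametric_intervalIntegral_of_continuous'
      (f := fun u lam => g (u, lam)) (by exact hgc) 0 (Real.pi * ω)
  -- Step B: conclude g(u₁,λ) = g(u₂,λ).
  intro u₁ hu₁ u₂ hu₂ lam hlam
  have hc1 : Continuous fun t : ℝ => g (u₁, t) :=
    hgc.comp (continuous_const.prodMk continuous_id)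
  have hc2 : Continuous fun t : ℝ => g (u₂, t) :=
    hgc.comp (continuous_const.prodMk continuous_id)
  have stepB : ∀ lam ∈ Set.Icc 0 Real.pi, g (u₁, lam) - g (u₂, lam) = 0 := by
    apply aux_const_of_integral (fun t => g (u₁, t) - g (u₂, t)) (hc1.sub hc2) hπ
    · intro lam₀ hlam₀
      have hω : lam₀ / Real.pi ∈ Set.Icc (0:ℝ) 1 := by
        exact ⟨div_nonneg hlam₀.1 hπ.le, by rw [div_le_one hπ]; exact hlam₀.2⟩
      have hπω : Real.pi * (lam₀ / Real.pi) = lam₀ := by field_simp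
      have e₁ := stepA _ hω u₁ hu₁
      have e₂ := stepA _ hω u₂ hu₂
      rw [hπω] at e₁ e₂
      rw [intervalIntegral.integral_sub
        (hc1.intervalIntegrable 0 lam₀) (hc2.intervalIntegrable 0 lam₀)]
      rw [e₁, e₂]
      ring
  have := stepB lam hlam
  rw [hmem hu₁ hlam, hmem hu₂ hlam] at this
  linarith
end

section
/- Let (a_j)_{j≥1} be real coefficients with ∑_{j≥1} j|a_j| < ∞ and suppose the power series A(z) = 1 − ∑_{j≥1} a_j z^j has no zeros in the closed unit disk |z| ≤ 1. Then 1/A(z) = ∑_{l≥0} ψ_l z^l where the coefficients satisfy ∑_{l≥0} (1+l)|ψ_l| < ∞. -/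
open Finset Metric

noncomputable section

namespace WLaux

def wt (f : ℕ → ℂ) (l : ℕ) : ℝ := (1 + (l : ℝ)) * ‖f l‖

lemma wt_nonneg (f : ℕ → ℂ) (l : ℕ) : 0 ≤ wt f l :=
  mul_nonneg (by positivity) (norm_nonneg _)

lemma norm_le_wt (f : ℕ → ℂ) (l : ℕ) : ‖f l‖ ≤ wt f l := by
  have h : (1:ℝ) * ‖f l‖ ≤ (1 + (l:ℝ)) * ‖f l‖ := by
    apply mul_le_mul_of_nonneg_right _ (norm_nonneg _)
    simp [le_add_iff_nonneg_right]
  simpa [wt] using h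

lemma summable_norm_of_wt {f : ℕ → ℂ} (hf : Summable (wt f)) :
    Summable fun l => ‖f l‖ :=
  hf.of_nonneg_of_le (fun _ => norm_nonneg _) (fun l => norm_le_wt f l)

lemma summable_eval {f : ℕ → ℂ} (hf : Summable (wt f)) {z : ℂ} (hz : ‖z‖ ≤ 1) :
    Summable fun l => f l * z ^ l := by
  apply Summable.of_norm_bounded (summable_norm_of_wt hf)
  intro l
  rw [norm_mul, norm_pow]
  calc ‖f l‖ * ‖z‖ ^ l ≤ ‖f l‖ * 1 ^ l := by
        gcongr
  _ = ‖f l‖ := by simp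

/-- convolution -/
def cv (f g : ℕ → ℂ) (l : ℕ) : ℂ := ∑ ij ∈ antidiagonal l, f ij.1 * g ij.2

lemma wt_cv_le (f g : ℕ → ℂ) (l : ℕ) :
    wt (cv f g) l ≤ ∑ ij ∈ antidiagonal l, wt f ij.1 * wt g ij.2 := by
  unfold wt cv
  calc (1 + (l:ℝ)) * ‖∑ ij ∈ antidiagonal l, f ij.1 * g ij.2‖
      ≤ (1 + (l:ℝ)) * ∑ ij ∈ antidiagonal l, ‖f ij.1 * g ij.2‖ := by
        apply mul_le_mul_of_nonneg_left (norm_sum_le _ _) (by positivity)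
  _ = ∑ ij ∈ antidiagonal l, (1 + (l:ℝ)) * (‖f ij.1‖ * ‖g ij.2‖) := by
        rw [Finset.mul_sum]; exact Finset.sum_congr rfl fun ij _ => by rw [norm_mul]
  _ ≤ ∑ ij ∈ antidiagonal l, (1 + (ij.1:ℝ)) * ‖f ij.1‖ * ((1 + (ij.2:ℝ)) * ‖g ij.2‖) := by
        apply Finset.sum_le_sum
        intro ij hij
        have hl : ij.1 + ij.2 = l := Finset.HasAntidiagonal.mem_antidiagonal.mp hij
        have h1 : (1 + (l:ℝ)) ≤ (1 + (ij.1:ℝ)) * (1 + (ij.2:ℝ)) := by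
          subst hl; push_cast; nlinarith [Nat.cast_nonneg (α := ℝ) ij.1, Nat.cast_nonneg (α := ℝ) ij.2]
        calc (1 + (l:ℝ)) * (‖f ij.1‖ * ‖g ij.2‖)
            ≤ (1 + (ij.1:ℝ)) * (1 + (ij.2:ℝ)) * (‖f ij.1‖ * ‖g ij.2‖) := by
              apply mul_le_mul_of_nonneg_right h1 (by positivity)
        _ = (1 + (ij.1:ℝ)) * ‖f ij.1‖ * ((1 + (ij.2:ℝ)) * ‖g ij.2‖) := by ring
  _ = ∑ ij ∈ antidiagonal l, wt f ij.1 * wt g ij.2 := rfl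

lemma summable_cauchy_wt {f g : ℕ → ℂ} (hf : Summable (wt f)) (hg : Summable (wt g)) :
    Summable (fun l => ∑ ij ∈ antidiagonal l, wt f ij.1 * wt g ij.2) := by
  have h := summable_norm_sum_mul_antidiagonal_of_summable_norm (R := ℝ)
    (f := wt f) (g := wt g) (by simpa [Real.norm_of_nonneg, wt_nonneg] using hf.abs)
    (by simpa [Real.norm_of_nonneg, wt_nonneg] using hg.abs)
  apply h.congr
  intro l
  exact Real.norm_of_nonneg (Finset.sum_nonneg fun ij _ =>
    mul_nonneg (wt_nonneg _ _) (wt_nonneg _ _))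

lemma summable_wt_cv {f g : ℕ → ℂ} (hf : Summable (wt f)) (hg : Summable (wt g)) :
    Summable (wt (cv f g)) :=
  (summable_cauchy_wt hf hg).of_nonneg_of_le (fun l => wt_nonneg _ _) (fun l => wt_cv_le f g l)

lemma tsum_wt_cv_le {f g : ℕ → ℂ} (hf : Summable (wt f)) (hg : Summable (wt g)) :
    ∑' l, wt (cv f g) l ≤ (∑' l, wt f l) * (∑' l, wt g l) := by
  have h1 : ∑' l, wt (cv f g) l ≤ ∑' l, ∑ ij ∈ antidiagonal l, wt f ij.1 * wt g ij.2 :=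
    Summable.tsum_le_tsum (wt_cv_le f g) (summable_wt_cv hf hg) (summable_cauchy_wt hf hg)
  have h2 : (∑' l, wt f l) * (∑' l, wt g l)
      = ∑' l, ∑ ij ∈ antidiagonal l, wt f ij.1 * wt g ij.2 :=
    tsum_mul_tsum_eq_tsum_sum_antidiagonal_of_summable_norm
      (by simpa [Real.norm_of_nonneg, wt_nonneg] using hf.abs)
      (by simpa [Real.norm_of_nonneg, wt_nonneg] using hg.abs)
  rw [h2]; exact h1

lemma eval_cv {f g : ℕ → ℂ} (hf : Summable (wt f)) (hg : Summable (wt g))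
    {z : ℂ} (hz : ‖z‖ ≤ 1) :
    (∑' l, f l * z ^ l) * (∑' l, g l * z ^ l) = ∑' l, cv f g l * z ^ l := by
  have hnf : Summable fun l => ‖f l * z ^ l‖ := by
    apply Summable.of_nonneg_of_le (fun _ => norm_nonneg _) _ (summable_norm_of_wt hf)
    intro l
    rw [norm_mul, norm_pow]
    calc ‖f l‖ * ‖z‖ ^ l ≤ ‖f l‖ * 1 ^ l := by gcongr
    _ = ‖f l‖ := by simp
  have hng : Summable fun l => ‖g l * z ^ l‖ := by
    apply Summable.of_nonneg_of_le (fun _ => norm_nonneg _) _ (summable_norm_of_wt hg)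
    intro l
    rw [norm_mul, norm_pow]
    calc ‖g l‖ * ‖z‖ ^ l ≤ ‖g l‖ * 1 ^ l := by gcongr
    _ = ‖g l‖ := by simp
  rw [tsum_mul_tsum_eq_tsum_sum_antidiagonal_of_summable_norm hnf hng]
  apply tsum_congr
  intro l
  unfold cv
  rw [Finset.sum_mul]
  apply Finset.sum_congr rfl
  intro ij hij
  have hl : ij.1 + ij.2 = l := Finset.HasAntidiagonal.mem_antidiagonal.mp hij
  rw [← hl, pow_add]; ring

lemma exists_coeffs {f : ℂ → ℂ} {r M : ℝ} (hr : 1 < r) (hM : 0 ≤ M)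
    (hf : DifferentiableOn ℂ f (closedBall 0 r))
    (hb : ∀ z ∈ closedBall (0:ℂ) r, ‖f z‖ ≤ M) :
    ∃ q : ℕ → ℂ, (∀ k, ‖q k‖ ≤ M * r⁻¹ ^ k) ∧
      ∀ z : ℂ, ‖z‖ ≤ 1 → HasSum (fun k => q k * z ^ k) (f z) := by
  have hr0 : (0:ℝ) < r := lt_trans one_pos hr
  set R : NNReal := r.toNNReal with hR
  have hRr : (R : ℝ) = r := Real.coe_toNNReal r hr0.le
  have hfd : DifferentiableOn ℂ f (closedBall 0 (R : ℝ)) := by rwa [hRr]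
  have hps : HasFPowerSeriesOnBall f (cauchyPowerSeries f 0 (R : ℝ)) 0 R :=
    hfd.hasFPowerSeriesOnBall (by simp [hR]; exact hr0)
  set ps := cauchyPowerSeries f 0 (R : ℝ) with hps_def
  refine ⟨fun k => ps.coeff k, ?_, ?_⟩
  · intro k
    have h1 : ‖ps.coeff k‖ ≤ ‖ps k‖ := by
      have hdef : ps.coeff k = ps k (fun _ => (1:ℂ)) := rfl
      rw [hdef]
      simpa using (ps k).le_opNorm (fun _ => (1:ℂ))
    have h2 : ‖ps k‖ ≤ ((2 * Real.pi)⁻¹ * ∫ θ : ℝ in (0)..(2 * Real.pi),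
        ‖f (circleMap 0 (R:ℝ) θ)‖) * |(R:ℝ)|⁻¹ ^ k :=
      norm_cauchyPowerSeries_le f 0 (R : ℝ) k
    have hcont : Continuous fun θ : ℝ => ‖f (circleMap 0 (R:ℝ) θ)‖ := by
      apply Continuous.norm
      apply hf.continuousOn.comp_continuous (continuous_circleMap 0 (R:ℝ))
      intro θ
      simp [mem_closedBall_zero_iff, hRr, norm_circleMap_zero, abs_of_pos hr0]
    have hint : (∫ θ : ℝ in (0)..(2 * Real.pi), ‖f (circleMap 0 (R:ℝ) θ)‖)
        ≤ 2 * Real.pi * M := by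
      have : (∫ θ : ℝ in (0)..(2 * Real.pi), ‖f (circleMap 0 (R:ℝ) θ)‖)
          ≤ ∫ _ : ℝ in (0)..(2 * Real.pi), M := by
        apply intervalIntegral.integral_mono_on (by positivity)
          (hcont.intervalIntegrable 0 (2 * Real.pi)) (by simp)
        intro θ _
        apply hb
        simp [mem_closedBall_zero_iff, hRr, norm_circleMap_zero, abs_of_pos hr0]
      simpa [mul_comm] using this
    have hpi : (0:ℝ) < 2 * Real.pi := by positivity
    calc ‖ps.coeff k‖ ≤ ((2 * Real.pi)⁻¹ * ∫ θ : ℝ in (0)..(2 * Real.pi),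
        ‖f (circleMap 0 (R:ℝ) θ)‖) * |(R:ℝ)|⁻¹ ^ k := le_trans h1 h2
    _ ≤ ((2 * Real.pi)⁻¹ * (2 * Real.pi * M)) * |(R:ℝ)|⁻¹ ^ k := by
        gcongr
    _ = M * r⁻¹ ^ k := by
        rw [hRr, abs_of_pos hr0]
        field_simp
  · intro z hz
    have hzmem : z ∈ Metric.eball (0:ℂ) (R : ENNReal) := by
      rw [mem_emetric_ball_zero_iff]
      rw [show ((R : ENNReal)) = ((R:NNReal) : ENNReal) from rfl]
      rw [enorm_eq_nnnorm, ENNReal.coe_lt_coe, ← NNReal.coe_lt_coe, coe_nnnorm, hRr]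
      exact lt_of_le_of_lt hz hr
    have h := hps.hasSum hzmem
    simp only [zero_add] at h
    have heq : ∀ k, (ps.coeff k) * z ^ k = ps k (fun _ => z) := by
      intro k
      rw [FormalMultilinearSeries.apply_eq_pow_smul_coeff, smul_eq_mul]
      ring
    exact h.congr_fun heq

/-- The complex-coefficient core of the Wiener lemma. -/
lemma core (a : ℕ → ℝ)
    (hsum : Summable fun j : ℕ => (j : ℝ) * |a j|)
    (hA : ∀ z : ℂ, ‖z‖ ≤ 1 →
      1 - ∑' j : ℕ, (a (j + 1) : ℂ) * z ^ (j + 1) ≠ 0) :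
    ∃ ψ : ℕ → ℂ, Summable (wt ψ) ∧
      ∀ z : ℂ, ‖z‖ ≤ 1 →
        (∑' l : ℕ, ψ l * z ^ l) *
          (1 - ∑' j : ℕ, (a (j + 1) : ℂ) * z ^ (j + 1)) = 1 := by
  classical
  set cseq : ℕ → ℂ := fun j => if j = 0 then 1 else -(a j : ℂ) with hcseq
  -- summability of the weighted coefficients of cseq
  have h1 : Summable fun j : ℕ => ((j : ℝ) + 1) * |a (j + 1)| := by
    have := (summable_nat_add_iff (f := fun j : ℕ => (j : ℝ) * |a j|) 1).2 hsum
    apply this.congr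
    intro j
    push_cast
    ring
  have habs : Summable fun j : ℕ => |a (j + 1)| := by
    apply h1.of_nonneg_of_le (fun _ => abs_nonneg _)
    intro j
    nlinarith [abs_nonneg (a (j+1)), Nat.cast_nonneg (α := ℝ) j]
  have hwt : Summable (wt cseq) := by
    rw [← summable_nat_add_iff 1]
    have : (fun j : ℕ => wt cseq (j + 1))
        = fun j : ℕ => ((j:ℝ) + 1) * |a (j+1)| + |a (j+1)| := by
      funext j
      have hc : cseq (j+1) = -(a (j+1) : ℂ) := by simp [hcseq]
      simp only [wt, hc, norm_neg, Complex.norm_real, Real.norm_eq_abs]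
      push_cast
      ring
    rw [this]
    exact h1.add habs
  -- the function F
  set F : ℂ → ℂ := fun z => ∑' j, cseq j * z ^ j with hF
  have hFeq : ∀ z : ℂ, ‖z‖ ≤ 1 →
      F z = 1 - ∑' j : ℕ, (a (j + 1) : ℂ) * z ^ (j + 1) := by
    intro z hz
    have hs := summable_eval hwt hz
    rw [hF]
    simp only
    rw [Summable.tsum_eq_zero_add hs]
    have h0 : cseq 0 * z ^ 0 = 1 := by simp [hcseq]
    have h2 : ∑' j : ℕ, cseq (j+1) * z ^ (j+1)
        = -∑' j : ℕ, (a (j + 1) : ℂ) * z ^ (j + 1) := by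
      rw [← tsum_neg]
      apply tsum_congr
      intro j
      simp [hcseq]
    rw [h0, h2]
    ring
  have hFne : ∀ z ∈ closedBall (0:ℂ) 1, F z ≠ 0 := by
    intro z hz
    rw [mem_closedBall_zero_iff] at hz
    rw [hFeq z hz]
    exact hA z hz
  -- continuity and minimum
  have hFc : ContinuousOn F (closedBall (0:ℂ) 1) := by
    have htu := tendstoUniformlyOn_tsum (f := fun j (z:ℂ) => cseq j * z ^ j)
      (summable_norm_of_wt hwt) (s := closedBall (0:ℂ) 1) ?_
    · exact htu.continuousOn (Filter.Eventually.frequently (Filter.Eventually.of_forall fun tset =>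
        (Continuous.continuousOn (continuous_finset_sum _ fun i _ =>
          continuous_const.mul (continuous_pow i)))))
    · intro n x hx
      rw [mem_closedBall_zero_iff] at hx
      rw [norm_mul, norm_pow]
      calc ‖cseq n‖ * ‖x‖ ^ n ≤ ‖cseq n‖ * 1 ^ n := by gcongr
      _ = ‖cseq n‖ := by simp
  obtain ⟨z₀, hz₀mem, hz₀min⟩ := (isCompact_closedBall (0:ℂ) 1).exists_isMinOn
    ⟨0, by simp⟩ hFc.norm
  set ε : ℝ := ‖F z₀‖ with hεdef
  have hε : 0 < ε := norm_pos_iff.mpr (hFne z₀ hz₀mem)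
  have hεle : ∀ z ∈ closedBall (0:ℂ) 1, ε ≤ ‖F z‖ := fun z hz => hz₀min hz
  -- choose N
  have htail := tendsto_sum_nat_add (wt cseq)
  obtain ⟨N, hN⟩ := (htail.eventually_lt_const (by positivity : (0:ℝ) < ε/3)).exists
  -- split
  set pseq : ℕ → ℂ := fun j => if j < N then cseq j else 0 with hpseq
  set tseq : ℕ → ℂ := fun j => if j < N then 0 else cseq j with htseq
  have hsplit : ∀ j, cseq j = pseq j + tseq j := by
    intro j
    by_cases h : j < N <;> simp [hpseq, htseq, h]
  have hwt_p : Summable (wt pseq) := by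
    apply hwt.of_nonneg_of_le (fun l => wt_nonneg _ _)
    intro l
    by_cases h : l < N
    · simp only [wt, hpseq, if_pos h]
      exact le_refl _
    · simp only [wt, hpseq, if_neg h, norm_zero, mul_zero]
      exact wt_nonneg _ _
  have hwt_t : Summable (wt tseq) := by
    apply hwt.of_nonneg_of_le (fun l => wt_nonneg _ _)
    intro l
    by_cases h : l < N
    · simp only [wt, htseq, if_pos h, norm_zero, mul_zero]
      exact wt_nonneg _ _
    · simp only [wt, htseq, if_neg h]
      exact le_refl _
  set τ : ℝ := ∑' l, wt tseq l with hτdef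
  have hτ0 : 0 ≤ τ := tsum_nonneg (fun l => wt_nonneg _ _)
  have hτ : τ < ε / 3 := by
    have hinj : Function.Injective (fun k : ℕ => k + N) := add_left_injective N
    have hsupp : Function.support (wt tseq) ⊆ Set.range (fun k : ℕ => k + N) := by
      intro l hl
      rcases le_or_gt N l with h | h
      · exact ⟨l - N, by simp; omega⟩
      · exfalso
        apply hl
        simp [wt, htseq, h]
    have := hinj.tsum_eq (f := wt tseq) hsupp
    rw [hτdef, ← this]
    have heq : ∀ k : ℕ, wt tseq (k + N) = wt cseq (k + N) := by
      intro k
      simp [wt, htseq, Nat.not_lt.mpr (Nat.le_add_left N k)]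
    calc ∑' k, wt tseq (k + N) = ∑' k, wt cseq (k + N) := tsum_congr heq
    _ < ε / 3 := hN
  -- the polynomial part
  set pfun : ℂ → ℂ := fun z => ∑ j ∈ range N, cseq j * z ^ j with hpfun
  have hpdiff : Differentiable ℂ pfun := by
    apply Differentiable.fun_sum
    intro j _
    exact (differentiable_pow j).const_mul _
  have heval_p : ∀ z : ℂ, ∑' j, pseq j * z ^ j = pfun z := by
    intro z
    rw [tsum_eq_sum (s := range N) (fun b hb => by
      rw [mem_range] at hb
      simp [hpseq, hb])]
    apply Finset.sum_congr rfl
    intro j hj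
    rw [mem_range] at hj
    simp [hpseq, hj]
  have hTbd : ∀ z : ℂ, ‖z‖ ≤ 1 → ‖∑' j, tseq j * z ^ j‖ ≤ τ := by
    intro z hz
    have hs : Summable fun l => ‖tseq l * z ^ l‖ := (summable_eval hwt_t hz).norm
    calc ‖∑' j, tseq j * z ^ j‖ ≤ ∑' j, ‖tseq j * z ^ j‖ := norm_tsum_le_tsum_norm hs
    _ ≤ ∑' j, wt tseq j := by
        apply Summable.tsum_le_tsum _ hs hwt_t
        intro l
        rw [norm_mul, norm_pow]
        calc ‖tseq l‖ * ‖z‖ ^ l ≤ ‖tseq l‖ * 1 ^ l := by gcongr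
        _ = ‖tseq l‖ := by simp
        _ ≤ wt tseq l := norm_le_wt _ _
  have hdecomp : ∀ z : ℂ, ‖z‖ ≤ 1 → F z = pfun z + ∑' j, tseq j * z ^ j := by
    intro z hz
    rw [hF]
    simp only
    rw [← heval_p z, ← Summable.tsum_add (summable_eval hwt_p hz) (summable_eval hwt_t hz)]
    apply tsum_congr
    intro j
    rw [hsplit j]
    ring
  have hplow : ∀ z ∈ closedBall (0:ℂ) 1, 2*ε/3 ≤ ‖pfun z‖ := by
    intro z hz
    have hz' : ‖z‖ ≤ 1 := mem_closedBall_zero_iff.mp hz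
    have h1 := hεle z hz
    have h2 := hTbd z hz'
    have h3 := hdecomp z hz'
    have h4 : ‖F z‖ ≤ ‖pfun z‖ + ‖∑' j, tseq j * z ^ j‖ := h3 ▸ norm_add_le _ _
    linarith
  -- enlarge the disk
  have hUopen : IsOpen {z : ℂ | ε/2 < ‖pfun z‖} :=
    isOpen_lt continuous_const hpdiff.continuous.norm
  have hsub : closedBall (0:ℂ) 1 ⊆ {z : ℂ | ε/2 < ‖pfun z‖} := by
    intro z hz
    have := hplow z hz
    simp only [Set.mem_setOf_eq]
    linarith
  obtain ⟨δ, hδ, hth⟩ := (isCompact_closedBall (0:ℂ) 1).exists_thickening_subset_open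
    hUopen hsub
  set r : ℝ := 1 + δ/2 with hrdef
  have hr1 : 1 < r := by rw [hrdef]; linarith
  have hrU : ∀ z ∈ closedBall (0:ℂ) r, ε/2 < ‖pfun z‖ := by
    intro z hz
    rw [mem_closedBall_zero_iff] at hz
    apply hth
    rw [mem_thickening_iff]
    rcases le_or_gt ‖z‖ 1 with h | h
    · exact ⟨z, mem_closedBall_zero_iff.mpr h, by simpa using hδ⟩
    · refine ⟨((‖z‖⁻¹ : ℝ) : ℂ) * z, ?_, ?_⟩
      · have hzn : ‖z‖ ≠ 0 := by positivity
        rw [mem_closedBall_zero_iff, norm_mul, Complex.norm_real, Real.norm_eq_abs,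
          abs_of_nonneg (inv_nonneg.mpr (norm_nonneg z)), inv_mul_cancel₀ hzn]
      · rw [dist_eq_norm]
        have hzpos : (0:ℝ) < ‖z‖ := lt_trans one_pos h
        have h5 : z - ((‖z‖⁻¹ : ℝ) : ℂ) * z = ((1 - ‖z‖⁻¹ : ℝ) : ℂ) * z := by
          push_cast
          ring
        rw [h5, norm_mul, Complex.norm_real, Real.norm_eq_abs,
          abs_of_nonneg (by rw [sub_nonneg]; exact inv_le_one_of_one_le₀ h.le),
          sub_mul, one_mul, inv_mul_cancel₀ (by positivity : ‖z‖ ≠ 0)]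
        rw [hrdef] at hz
        linarith
  -- coefficients of inverse powers
  have hqn : ∀ n : ℕ, ∃ q : ℕ → ℂ, (∀ k, ‖q k‖ ≤ (ε/2)⁻¹ ^ (n+1) * r⁻¹ ^ k) ∧
      ∀ z : ℂ, ‖z‖ ≤ 1 → HasSum (fun k => q k * z ^ k) (((pfun z) ^ (n+1))⁻¹) := by
    intro n
    have hM0 : (0:ℝ) ≤ (ε/2)⁻¹ ^ (n+1) :=
      pow_nonneg (inv_nonneg.mpr (by linarith)) _
    apply exists_coeffs hr1 hM0
    · apply DifferentiableOn.inv
      · exact (hpdiff.pow (n+1)).differentiableOn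
      · intro z hz
        have := hrU z hz
        apply pow_ne_zero
        intro h0
        rw [h0] at this
        simp at this
        linarith
    · intro z hz
      have hlow := hrU z hz
      rw [norm_inv, norm_pow, ← inv_pow]
      have h6 : (0:ℝ) < ε/2 := by linarith
      have h7 : ‖pfun z‖⁻¹ ≤ (ε/2)⁻¹ := by
        apply inv_anti₀ h6 hlow.le
      exact pow_le_pow_left₀ (inv_nonneg.mpr (norm_nonneg _)) h7 (n+1)
  choose Q hQbd hQev using hqn
  -- geometric weighted sum
  have hrinv : |r⁻¹| < 1 := by
    rw [abs_of_pos (by positivity)]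
    rw [inv_lt_one_iff₀]
    right; exact hr1
  have hgeom : Summable fun k : ℕ => (1 + (k:ℝ)) * r⁻¹ ^ k := by
    have h1 : Summable fun k : ℕ => r⁻¹ ^ k :=
      summable_geometric_of_lt_one (by positivity) (by
        rw [abs_of_pos (by positivity)] at hrinv; exact hrinv)
    have h2 : Summable fun k : ℕ => (k:ℝ) * r⁻¹ ^ k := by
      have := summable_pow_mul_geometric_of_norm_lt_one (R := ℝ) 1
        (r := r⁻¹) (by rwa [Real.norm_eq_abs])
      apply this.congr
      intro k
      simp
    apply (h1.add h2).congr
    intro k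
    ring
  set Cr : ℝ := ∑' k : ℕ, (1 + (k:ℝ)) * r⁻¹ ^ k with hCr
  have hCr0 : 0 ≤ Cr := tsum_nonneg (fun k => by positivity)
  have hQwt : ∀ n : ℕ, Summable (wt (Q n)) ∧
      ∑' k, wt (Q n) k ≤ (ε/2)⁻¹ ^ (n+1) * Cr := by
    intro n
    have hb : ∀ k, wt (Q n) k ≤ (ε/2)⁻¹ ^ (n+1) * ((1 + (k:ℝ)) * r⁻¹ ^ k) := by
      intro k
      simp only [wt]
      calc (1 + (k:ℝ)) * ‖Q n k‖ ≤ (1 + (k:ℝ)) * ((ε/2)⁻¹ ^ (n+1) * r⁻¹ ^ k) := by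
            apply mul_le_mul_of_nonneg_left (hQbd n k) (by positivity)
      _ = (ε/2)⁻¹ ^ (n+1) * ((1 + (k:ℝ)) * r⁻¹ ^ k) := by ring
    have hs : Summable fun k : ℕ => (ε/2)⁻¹ ^ (n+1) * ((1 + (k:ℝ)) * r⁻¹ ^ k) :=
      hgeom.mul_left _
    constructor
    · exact hs.of_nonneg_of_le (fun k => wt_nonneg _ _) hb
    · calc ∑' k, wt (Q n) k ≤ ∑' k : ℕ, (ε/2)⁻¹ ^ (n+1) * ((1 + (k:ℝ)) * r⁻¹ ^ k) :=
            Summable.tsum_le_tsum hb (hs.of_nonneg_of_le (fun k => wt_nonneg _ _) hb) hs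
      _ = (ε/2)⁻¹ ^ (n+1) * Cr := by rw [tsum_mul_left]
  -- convolution powers of the tail
  set e : ℕ → ℂ := fun l => if l = 0 then 1 else 0 with he
  have hwte : Summable (wt e) ∧ ∑' l, wt e l = 1 := by
    have : HasSum (wt e) 1 := by
      have h := hasSum_ite_eq (0:ℕ) (1:ℝ)
      apply h.congr_fun
      intro l
      by_cases hl : l = 0 <;> simp [wt, he, hl]
    exact ⟨this.summable, this.tsum_eq⟩
  have heval_e : ∀ z : ℂ, ∑' l, e l * z ^ l = 1 := by
    intro z
    have : HasSum (fun l => e l * z ^ l) 1 := by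
      have h := hasSum_ite_eq (0:ℕ) (1:ℂ)
      apply h.congr_fun
      intro l
      by_cases hl : l = 0 <;> simp [he, hl]
    exact this.tsum_eq
  set tp : ℕ → ℕ → ℂ := fun n => (cv tseq)^[n] e with htp
  have htp0 : tp 0 = e := rfl
  have htpS : ∀ n, tp (n+1) = cv tseq (tp n) := by
    intro n
    rw [htp]
    exact Function.iterate_succ_apply' (cv tseq) n e
  have htpwt : ∀ n, Summable (wt (tp n)) ∧ ∑' l, wt (tp n) l ≤ τ ^ n := by
    intro n
    induction n with
    | zero => rw [htp0]; exact ⟨hwte.1, by rw [hwte.2]; simp⟩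
    | succ n ih =>
        rw [htpS n]
        refine ⟨summable_wt_cv hwt_t ih.1, ?_⟩
        calc ∑' l, wt (cv tseq (tp n)) l ≤ (∑' l, wt tseq l) * (∑' l, wt (tp n) l) :=
              tsum_wt_cv_le hwt_t ih.1
        _ ≤ τ * τ ^ n := by
              apply mul_le_mul (le_refl τ) ih.2 (tsum_nonneg fun l => wt_nonneg _ _) hτ0
        _ = τ ^ (n+1) := by ring
  have heval_tp : ∀ n (z : ℂ), ‖z‖ ≤ 1 →
      ∑' l, tp n l * z ^ l = (∑' l, tseq l * z ^ l) ^ n := by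
    intro n z hz
    induction n with
    | zero => rw [htp0, heval_e]; simp
    | succ n ih =>
        rw [htpS n, ← eval_cv hwt_t (htpwt n).1 hz, ih]
        ring
  -- the building blocks u n = tp n ⋆ Q n
  set u : ℕ → ℕ → ℂ := fun n => cv (tp n) (Q n) with hu
  have hu_wt : ∀ n, Summable (wt (u n)) := fun n =>
    summable_wt_cv (htpwt n).1 (hQwt n).1
  set x : ℝ := τ * (ε/2)⁻¹ with hx
  have hx0 : 0 ≤ x := by positivity
  have hx1 : x < 1 := by
    rw [hx]
    rw [mul_inv_lt_iff₀ (by positivity)]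
    linarith
  set B : ℕ → ℝ := fun n => Cr * (ε/2)⁻¹ * x ^ n with hB
  have hu_bd : ∀ n, ∑' l, wt (u n) l ≤ B n := by
    intro n
    calc ∑' l, wt (u n) l ≤ (∑' l, wt (tp n) l) * (∑' l, wt (Q n) l) :=
          tsum_wt_cv_le (htpwt n).1 (hQwt n).1
    _ ≤ τ ^ n * ((ε/2)⁻¹ ^ (n+1) * Cr) := by
          apply mul_le_mul (htpwt n).2 (hQwt n).2
            (tsum_nonneg fun l => wt_nonneg _ _) (by positivity)
    _ = B n := by rw [hB, hx]; ring
  have hBsum : Summable B := by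
    apply Summable.mul_left
    exact summable_geometric_of_lt_one hx0 hx1
  -- double summability
  set w2 : ℕ × ℕ → ℝ := fun p => wt (u p.1) p.2 with hw2
  have hw2nn : ∀ p, 0 ≤ w2 p := fun p => wt_nonneg _ _
  have hw2sum : Summable w2 := by
    rw [summable_prod_of_nonneg hw2nn]
    refine ⟨fun n => (hu_wt n), ?_⟩
    apply hBsum.of_nonneg_of_le
      (fun n => tsum_nonneg fun l => wt_nonneg _ _) hu_bd
  have hw2swap : Summable fun p : ℕ × ℕ => w2 p.swap := hw2sum.prod_symm
  have hcol : ∀ l, Summable fun n => wt (u n) l := by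
    intro l
    have := ((summable_prod_of_nonneg (fun p => hw2nn p.swap)).mp hw2swap).1 l
    exact this
  have houter : Summable fun l => ∑' n, wt (u n) l :=
    ((summable_prod_of_nonneg (fun p => hw2nn p.swap)).mp hw2swap).2
  -- define ψ
  set ψ : ℕ → ℂ := fun l => ∑' n, (-1:ℂ) ^ n * u n l with hψ
  have hψrow : ∀ l, Summable fun n => (-1:ℂ) ^ n * u n l := by
    intro l
    apply Summable.of_norm_bounded (hcol l)
    intro n
    rw [norm_mul, norm_pow, norm_neg, norm_one, one_pow, one_mul]
    exact norm_le_wt _ _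
  have hψwt : Summable (wt ψ) := by
    apply houter.of_nonneg_of_le (fun l => wt_nonneg _ _)
    intro l
    simp only [wt, hψ]
    calc (1 + (l:ℝ)) * ‖∑' n, (-1:ℂ) ^ n * u n l‖
        ≤ (1 + (l:ℝ)) * ∑' n, ‖(-1:ℂ) ^ n * u n l‖ := by
          apply mul_le_mul_of_nonneg_left
            (norm_tsum_le_tsum_norm (hψrow l).norm) (by positivity)
    _ = ∑' n, (1 + (l:ℝ)) * ‖(-1:ℂ) ^ n * u n l‖ := by rw [tsum_mul_left]
    _ = ∑' n, wt (u n) l := by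
          apply tsum_congr
          intro n
          rw [norm_mul, norm_pow, norm_neg, norm_one, one_pow, one_mul]
          rfl
  refine ⟨ψ, hψwt, ?_⟩
  -- the evaluation identity
  intro z hz
  rw [← hFeq z hz]
  -- interchange of sums
  set v : ℕ × ℕ → ℂ := fun p => (-1:ℂ) ^ p.1 * u p.1 p.2 * z ^ p.2 with hv
  have hvsum : Summable v := by
    apply Summable.of_norm_bounded hw2sum
    intro p
    rw [norm_mul, norm_mul, norm_pow, norm_pow, norm_neg, norm_one, one_pow, one_mul]
    calc ‖u p.1 p.2‖ * ‖z‖ ^ p.2 ≤ ‖u p.1 p.2‖ * 1 ^ p.2 := by gcongr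
    _ = ‖u p.1 p.2‖ := by simp
    _ ≤ w2 p := norm_le_wt _ _
  have hrows : ∀ n, Summable fun l => v (n, l) := by
    intro n
    have hs := summable_eval (hu_wt n) hz
    apply (hs.mul_left ((-1:ℂ)^n)).congr
    intro l
    rw [hv]
    ring
  have hcols : ∀ l, Summable fun n => v (n, l) := by
    intro l
    apply ((hψrow l).mul_right (z ^ l)).congr
    intro n
    rw [hv]
  have hswap : ∑' l, ∑' n, v (n, l) = ∑' n, ∑' l, v (n, l) := by
    rw [← Summable.tsum_prod' hvsum hrows]
    have h8 : ∑' (p : ℕ × ℕ), v p.swap = ∑' (l : ℕ), ∑' (n : ℕ), v (n, l) :=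
      Summable.tsum_prod' hvsum.prod_symm (fun l => hcols l)
    rw [← h8]
    exact (Equiv.prodComm ℕ ℕ).tsum_eq v
  have hlhs : ∑' l, ψ l * z ^ l = ∑' n, ∑' l, v (n, l) := by
    rw [← hswap]
    apply tsum_congr
    intro l
    rw [show ψ l = ∑' n, (-1:ℂ) ^ n * u n l from rfl, ← tsum_mul_right]
  -- evaluate each term
  have hP : ε/2 < ‖pfun z‖ := hrU z (by
    rw [mem_closedBall_zero_iff]; linarith [hr1.le, hz])
  have hPne : pfun z ≠ 0 := by
    intro h0
    rw [h0] at hP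
    simp at hP
    linarith
  set T : ℂ := ∑' l, tseq l * z ^ l with hT
  have hTτ : ‖T‖ ≤ τ := hTbd z hz
  have hterm : ∀ n, ∑' l, v (n, l) =
      (pfun z)⁻¹ * (-(T * (pfun z)⁻¹)) ^ n := by
    intro n
    have h1 : ∑' l, v (n, l) = (-1:ℂ)^n * ∑' l, u n l * z ^ l := by
      rw [← tsum_mul_left]
      apply tsum_congr
      intro l
      rw [hv]
      ring
    have h2 : ∑' l, u n l * z ^ l = T ^ n * ((pfun z) ^ (n+1))⁻¹ := by
      rw [hu]
      simp only
      rw [← eval_cv (htpwt n).1 (hQwt n).1 hz]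
      rw [heval_tp n z hz, (hQev n z hz).tsum_eq, ← hT]
    rw [h1, h2]
    rw [← inv_pow]
    rw [pow_succ]
    ring
  have hxz : ‖-(T * (pfun z)⁻¹)‖ < 1 := by
    rw [norm_neg, norm_mul, norm_inv]
    calc ‖T‖ * ‖pfun z‖⁻¹ ≤ τ * ‖pfun z‖⁻¹ := by
          apply mul_le_mul_of_nonneg_right hTτ (by positivity)
    _ < 1 := by
        rw [mul_inv_lt_iff₀ (show (0:ℝ) < ‖pfun z‖ by linarith)]
        calc τ < ε/3 := hτ
        _ ≤ ε/2 := by linarith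
        _ < ‖pfun z‖ := hP
        _ = 1 * ‖pfun z‖ := (one_mul _).symm
  have hsum_geo : ∑' n, ∑' l, v (n, l) =
      (pfun z)⁻¹ * (1 - (-(T * (pfun z)⁻¹)))⁻¹ := by
    rw [tsum_congr hterm, tsum_mul_left, tsum_geometric_of_norm_lt_one hxz]
  rw [hlhs, hsum_geo, hdecomp z hz, ← hT]
  have hne2 : pfun z + T ≠ 0 := by
    rw [hT, ← hdecomp z hz]
    exact hFne z (mem_closedBall_zero_iff.mpr hz)
  have h1x : 1 - (-(T * (pfun z)⁻¹)) = (pfun z + T) * (pfun z)⁻¹ := by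
    rw [add_mul, mul_inv_cancel₀ hPne]; ring
  rw [h1x, mul_inv, inv_inv]
  field_simp

end WLaux

end

/-- Wiener-type lemma: if `∑ j |a_j| < ∞` and
`A(z) = 1 − ∑_{j≥1} a_j z^j` has no zero in the closed unit disk, then
`1/A(z) = ∑_{l≥0} ψ_l z^l` with `∑ (1+l)|ψ_l| < ∞`. -/
theorem wiener_lemma_inverse_power_series (a : ℕ → ℝ)
    (hsum : Summable fun j : ℕ => (j : ℝ) * |a j|)
    (hA : ∀ z : ℂ, ‖z‖ ≤ 1 →
      1 - ∑' j : ℕ, (a (j + 1) : ℂ) * z ^ (j + 1) ≠ 0) :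
    ∃ ψ : ℕ → ℝ, (Summable fun l : ℕ => (1 + (l : ℝ)) * |ψ l|) ∧
      ∀ z : ℂ, ‖z‖ ≤ 1 →
        (∑' l : ℕ, (ψ l : ℂ) * z ^ l) *
          (1 - ∑' j : ℕ, (a (j + 1) : ℂ) * z ^ (j + 1)) = 1 := by
  obtain ⟨ψc, hψwt, hψev⟩ := WLaux.core a hsum (fun z hz => hA z hz)
  have hmap : ∀ (f : ℕ → ℂ), (starRingEnd ℂ) (∑' n, f n) = ∑' n, (starRingEnd ℂ) (f n) := by
    intro f
    have := ContinuousLinearEquiv.map_tsum (L := SummationFilter.unconditional ℕ) (f := f) Complex.conjCLE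
    simpa using this
  set φ : ℕ → ℂ := fun l => (starRingEnd ℂ) (ψc l) with hφ
  have hφwt : Summable (WLaux.wt φ) := by
    apply hψwt.congr
    intro l
    simp [WLaux.wt, hφ]
  have hφev : ∀ z : ℂ, ‖z‖ ≤ 1 →
      (∑' l : ℕ, φ l * z ^ l) * (1 - ∑' j : ℕ, (a (j + 1) : ℂ) * z ^ (j + 1)) = 1 := by
    intro z hz
    have hzc : ‖(starRingEnd ℂ) z‖ ≤ 1 := by
      rw [show ‖(starRingEnd ℂ) z‖ = ‖z‖ from Complex.norm_conj z]
      exact hz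
    have h := hψev ((starRingEnd ℂ) z) hzc
    have h2 := congrArg (starRingEnd ℂ) h
    rw [map_one, map_mul] at h2
    have e1 : (starRingEnd ℂ) (∑' l : ℕ, ψc l * ((starRingEnd ℂ) z) ^ l)
        = ∑' l : ℕ, φ l * z ^ l := by
      rw [hmap]
      apply tsum_congr
      intro l
      rw [map_mul, map_pow, Complex.conj_conj]
    have e2 : (starRingEnd ℂ) (1 - ∑' j : ℕ, (a (j + 1) : ℂ) * ((starRingEnd ℂ) z) ^ (j + 1))
        = 1 - ∑' j : ℕ, (a (j + 1) : ℂ) * z ^ (j + 1) := by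
      rw [map_sub, map_one, hmap]
      have h3 : (∑' j : ℕ, (starRingEnd ℂ) ((a (j + 1) : ℂ) * ((starRingEnd ℂ) z) ^ (j + 1)))
          = ∑' j : ℕ, (a (j + 1) : ℂ) * z ^ (j + 1) := by
        apply tsum_congr
        intro j
        rw [map_mul, map_pow, Complex.conj_conj, Complex.conj_ofReal]
      rw [h3]
    rw [← e1, ← e2, h2]
  refine ⟨fun l => (ψc l).re, ?_, ?_⟩
  · apply hψwt.of_nonneg_of_le (fun l => by positivity)
    intro l
    have h1 : |(ψc l).re| ≤ ‖ψc l‖ := Complex.abs_re_le_norm (ψc l)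
    have h2 : (0:ℝ) ≤ 1 + l := by positivity
    simpa [WLaux.wt] using mul_le_mul_of_nonneg_left h1 h2
  · intro z hz
    have hz' : ‖z‖ ≤ 1 := hz
    have hre : ∀ l, ((ψc l).re : ℂ) = (ψc l + φ l) / 2 := by
      intro l
      have h4 := Complex.add_conj (ψc l)
      rw [hφ]
      simp only
      rw [h4]
      push_cast
      ring
    have hs1 : Summable fun l => ψc l * z ^ l := WLaux.summable_eval hψwt hz'
    have hs2 : Summable fun l => φ l * z ^ l := WLaux.summable_eval hφwt hz'
    have hsum_split : ∑' l : ℕ, ((ψc l).re : ℂ) * z ^ l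
        = ((∑' l : ℕ, ψc l * z ^ l) + ∑' l : ℕ, φ l * z ^ l) / 2 := by
      rw [← Summable.tsum_add hs1 hs2]
      have h5 : ∀ l : ℕ, ((ψc l).re : ℂ) * z ^ l
          = (2:ℂ)⁻¹ * (ψc l * z ^ l + φ l * z ^ l) := by
        intro l
        rw [hre l]
        ring
      rw [tsum_congr h5, tsum_mul_left]
      ring
    rw [hsum_split]
    have h1 := hψev z hz'
    have h2 := hφev z hz'
    set A : ℂ := 1 - ∑' j : ℕ, (a (j + 1) : ℂ) * z ^ (j + 1) with hA2
    calc ((∑' l : ℕ, ψc l * z ^ l) + ∑' l : ℕ, φ l * z ^ l) / 2 * A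
        = ((∑' l : ℕ, ψc l * z ^ l) * A + (∑' l : ℕ, φ l * z ^ l) * A) / 2 := by ring
    _ = 1 := by rw [h1, h2]; norm_num
end
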